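/- Fix λ ∈ {0,1} and x ∈ ℝ³, let g_λ(k) := ‖k‖^{−1/2} ε(k,λ), and set g̃_{x,λ}(k) := (e^{i⟨k,x⟩} − 1) g_λ(k) ∈ ℂ³. For all k, h ∈ ℝ³ with k ≠ 0, k−h ≠ 0, k_⊥ ≠ 0 and (k−h)_⊥ ≠ 0 one has ‖g̃_{x,λ}(k−h) − g̃_{x,λ}(k)‖ ≤ ‖k‖ ‖x‖ ‖g_λ(k−h) − g_λ(k)‖ + ‖h‖ ‖x‖ ‖k−h‖^{−1/2}. -/

import Mathlib

noncomputable section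

/-- `k_⊥ := (k₂, −k₁, 0)` for `k ∈ ℝ³`. -/
def perp (k : EuclideanSpace ℝ (Fin 3)) : EuclideanSpace ℝ (Fin 3) :=
  (WithLp.equiv 2 (Fin 3 → ℝ)).symm ![k 1, -(k 0), 0]

/-- The vector cross product on `ℝ³` (as Euclidean space). -/
def cross3 (a b : EuclideanSpace ℝ (Fin 3)) : EuclideanSpace ℝ (Fin 3) :=
  (WithLp.equiv 2 (Fin 3 → ℝ)).symm
    ![a 1 * b 2 - a 2 * b 1, a 2 * b 0 - a 0 * b 2, a 0 * b 1 - a 1 * b 0]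

/-- First Coulomb-gauge polarization vector `ε(k,0) := k_⊥ / ‖k_⊥‖`. -/
def eps0 (k : EuclideanSpace ℝ (Fin 3)) : EuclideanSpace ℝ (Fin 3) :=
  ‖perp k‖⁻¹ • perp k

/-- Second Coulomb-gauge polarization vector `ε(k,1) := (k/‖k‖) × ε(k,0)`. -/
def eps1 (k : EuclideanSpace ℝ (Fin 3)) : EuclideanSpace ℝ (Fin 3) :=
  cross3 (‖k‖⁻¹ • k) (eps0 k)

/-- The polarization vector `ε(k,λ)` for `λ ∈ {0,1}`. -/
def eps (lam : Fin 2) (k : EuclideanSpace ℝ (Fin 3)) : EuclideanSpace ℝ (Fin 3) :=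
  if lam = 0 then eps0 k else eps1 k

/-- The photon form factor `g_λ(k) := ‖k‖^{-1/2} ε(k,λ)`. -/
def gfac (lam : Fin 2) (k : EuclideanSpace ℝ (Fin 3)) : EuclideanSpace ℝ (Fin 3) :=
  (‖k‖ ^ (-(1 : ℝ) / 2)) • eps lam k

/-- Coordinatewise complexification `ℝ³ → ℂ³`. -/
def toC (v : EuclideanSpace ℝ (Fin 3)) : EuclideanSpace ℂ (Fin 3) :=
  (WithLp.equiv 2 (Fin 3 → ℂ)).symm fun i => (v i : ℂ)

/-- Gauge-transformed form factor `g̃_{x,λ}(k) := (e^{i⟨k,x⟩} − 1) g_λ(k) ∈ ℂ³`. -/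
def gtilde (lam : Fin 2) (x k : EuclideanSpace ℝ (Fin 3)) : EuclideanSpace ℂ (Fin 3) :=
  (Complex.exp (Complex.I * ((inner ℝ k x : ℝ) : ℂ)) - 1) • toC (gfac lam k)


lemma abs_exp_I_mul_sub_one (θ : ℝ) :
    ‖Complex.exp (Complex.I * θ) - 1‖ ≤ |θ| := by
  have he : Complex.exp (Complex.I * θ) - 1
      = Complex.ofReal (Real.cos θ - 1) + Complex.ofReal (Real.sin θ) * Complex.I := by
    rw [mul_comm, Complex.exp_mul_I]
    push_cast
    ring
  rw [he, Complex.norm_add_mul_I]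
  have h2 : (Real.cos θ - 1) ^ 2 + Real.sin θ ^ 2 ≤ θ ^ 2 := by
    have hs := Real.sin_sq_le_sq (x := θ / 2)
    have hc : Real.cos θ = 1 - 2 * Real.sin (θ / 2) ^ 2 := by
      have hc2 := Real.cos_two_mul (θ / 2)
      have hsc := Real.sin_sq_add_cos_sq (θ / 2)
      rw [show 2 * (θ / 2) = θ by ring] at hc2
      nlinarith
    have := Real.sin_sq_add_cos_sq θ
    nlinarith
  calc Real.sqrt ((Real.cos θ - 1) ^ 2 + Real.sin θ ^ 2) ≤ Real.sqrt (θ ^ 2) :=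
        Real.sqrt_le_sqrt h2
    _ = |θ| := Real.sqrt_sq_eq_abs θ

lemma norm_toC (v : EuclideanSpace ℝ (Fin 3)) : ‖toC v‖ = ‖v‖ := by
  simp [EuclideanSpace.norm_eq, toC, WithLp.equiv_symm_apply, PiLp.toLp_apply, Complex.norm_real]

lemma toC_sub (a b : EuclideanSpace ℝ (Fin 3)) : toC (a - b) = toC a - toC b := by
  ext i
  simp [toC, WithLp.equiv_symm_apply, PiLp.toLp_apply]

lemma norm_cross3_le (a b : EuclideanSpace ℝ (Fin 3)) : ‖cross3 a b‖ ≤ ‖a‖ * ‖b‖ := by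
  rw [EuclideanSpace.norm_eq, EuclideanSpace.norm_eq, EuclideanSpace.norm_eq,
    ← Real.sqrt_mul (by positivity)]
  apply Real.sqrt_le_sqrt
  simp [cross3, Fin.sum_univ_three, WithLp.equiv_symm_apply, PiLp.toLp_apply, Real.norm_eq_abs, sq_abs]
  nlinarith [sq_nonneg (a 0 * b 0 + a 1 * b 1 + a 2 * b 2), sq_nonneg (a 0), sq_nonneg (b 0)]

lemma norm_eps0 (k : EuclideanSpace ℝ (Fin 3)) (hkp : perp k ≠ 0) : ‖eps0 k‖ = 1 := by
  rw [eps0, norm_smul, norm_inv, norm_norm, inv_mul_cancel₀ (norm_ne_zero_iff.mpr hkp)]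

lemma norm_eps_le (lam : Fin 2) (k : EuclideanSpace ℝ (Fin 3)) (hk : k ≠ 0)
    (hkp : perp k ≠ 0) : ‖eps lam k‖ ≤ 1 := by
  rcases eq_or_ne lam 0 with h | h
  · rw [eps, if_pos h, norm_eps0 k hkp]
  · rw [eps, if_neg h, eps1]
    calc ‖cross3 (‖k‖⁻¹ • k) (eps0 k)‖ ≤ ‖‖k‖⁻¹ • k‖ * ‖eps0 k‖ := norm_cross3_le _ _
      _ = 1 := by
        rw [norm_smul, norm_inv, norm_norm, inv_mul_cancel₀ (norm_ne_zero_iff.mpr hk),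
          norm_eps0 k hkp, one_mul]

lemma norm_gfac_le (lam : Fin 2) (k : EuclideanSpace ℝ (Fin 3)) (hk : k ≠ 0)
    (hkp : perp k ≠ 0) : ‖gfac lam k‖ ≤ ‖k‖ ^ (-(1 : ℝ) / 2) := by
  rw [gfac, norm_smul, Real.norm_eq_abs, abs_of_nonneg (Real.rpow_nonneg (norm_nonneg k) _)]
  calc ‖k‖ ^ (-(1:ℝ)/2) * ‖eps lam k‖ ≤ ‖k‖ ^ (-(1:ℝ)/2) * 1 :=
        mul_le_mul_of_nonneg_left (norm_eps_le lam k hk hkp)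
          (Real.rpow_nonneg (norm_nonneg k) _)
    _ = ‖k‖ ^ (-(1:ℝ)/2) := mul_one _

/-- **Discrete derivative bound on the gauge-transformed form factor** (from
the proof of Proposition 5.5, the photon derivative bound):
`‖g̃_{x,λ}(k−h) − g̃_{x,λ}(k)‖ ≤ ‖k‖‖x‖‖g_λ(k−h) − g_λ(k)‖ + ‖h‖‖x‖‖k−h‖^{-1/2}`. -/
theorem stmt8 (lam : Fin 2) (x k h : EuclideanSpace ℝ (Fin 3))
    (hk : k ≠ 0) (hkh : k - h ≠ 0)
    (hkp : perp k ≠ 0) (hkhp : perp (k - h) ≠ 0) :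
    ‖gtilde lam x (k - h) - gtilde lam x k‖ ≤
      ‖k‖ * ‖x‖ * ‖gfac lam (k - h) - gfac lam k‖ +
        ‖h‖ * ‖x‖ * ‖k - h‖ ^ (-(1 : ℝ) / 2) := by
  set θ1 : ℝ := inner ℝ (k - h) x with hθ1
  set θ2 : ℝ := inner ℝ k x with hθ2
  set u := toC (gfac lam (k - h))
  set v := toC (gfac lam k)
  set e1 := Complex.exp (Complex.I * θ1)
  set e2 := Complex.exp (Complex.I * θ2)
  have split : ∀ (a b : ℂ) (p q : EuclideanSpace ℂ (Fin 3)),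
      (a - 1) • p - (b - 1) • q = (b - 1) • (p - q) + (a - b) • p := by
    intro a b p q
    module
  have key : gtilde lam x (k - h) - gtilde lam x k
      = (e2 - 1) • (u - v) + (e1 - e2) • u := by
    rw [gtilde, gtilde]
    exact split e1 e2 u v
  have huv : ‖u - v‖ = ‖gfac lam (k - h) - gfac lam k‖ := by
    rw [show u - v = toC (gfac lam (k - h) - gfac lam k) from (toC_sub _ _).symm, norm_toC]
  have h1 : ‖(e2 - 1 : ℂ)‖ ≤ ‖k‖ * ‖x‖ := by
    calc ‖(e2 - 1 : ℂ)‖ ≤ |θ2| := abs_exp_I_mul_sub_one θ2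
      _ ≤ ‖k‖ * ‖x‖ := abs_real_inner_le_norm k x
  have h2 : ‖(e1 - e2 : ℂ)‖ ≤ ‖h‖ * ‖x‖ := by
    have hfac : e1 - e2 = e2 * (Complex.exp (Complex.I * ((θ1 - θ2 : ℝ) : ℂ)) - 1) := by
      rw [mul_sub, mul_one, ← Complex.exp_add]
      show Complex.exp (Complex.I * θ1) - e2 = _
      congr 2
      push_cast
      ring
    have habs2 : ‖e2‖ = 1 := by
      simp [e2, Complex.norm_exp]
    calc ‖(e1 - e2 : ℂ)‖
        = ‖e2‖ * ‖Complex.exp (Complex.I * ((θ1 - θ2 : ℝ) : ℂ)) - 1‖ := by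
          rw [hfac]; exact norm_mul _ _
      _ ≤ 1 * |θ1 - θ2| := by
          rw [habs2]
          exact mul_le_mul_of_nonneg_left (abs_exp_I_mul_sub_one _) zero_le_one
      _ ≤ ‖h‖ * ‖x‖ := by
          rw [one_mul]
          have : θ1 - θ2 = -(inner ℝ h x : ℝ) := by
            rw [hθ1, hθ2, inner_sub_left]; ring
          rw [this, abs_neg]
          exact abs_real_inner_le_norm h x
  have hu : ‖u‖ ≤ ‖k - h‖ ^ (-(1 : ℝ) / 2) := by
    rw [show ‖u‖ = ‖gfac lam (k - h)‖ from norm_toC _]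
    exact norm_gfac_le lam (k - h) hkh hkhp
  calc ‖gtilde lam x (k - h) - gtilde lam x k‖
      ≤ ‖(e2 - 1) • (u - v)‖ + ‖(e1 - e2) • u‖ := by rw [key]; exact norm_add_le _ _
    _ = ‖(e2 - 1 : ℂ)‖ * ‖u - v‖ + ‖(e1 - e2 : ℂ)‖ * ‖u‖ := by rw [norm_smul, norm_smul]
    _ ≤ (‖k‖ * ‖x‖) * ‖gfac lam (k - h) - gfac lam k‖ + (‖h‖ * ‖x‖) * (‖k - h‖ ^ (-(1:ℝ)/2)) := by
        rw [huv]
        exact add_le_add (mul_le_mul_of_nonneg_right h1 (norm_nonneg _))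
          (mul_le_mul h2 hu (norm_nonneg _) (by positivity))
    _ = _ := by ring
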